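/- arXiv:2402.12619 — 2 statements merged into one kernel-verified Lean document; each statement's English description precedes it below -/
import Mathlib

section
/- Let m ≥ 2 be an integer that is not prime, and let T = Tr(Z_m). Then the clique number of the commuting graph Γ(T) is m(m−1). In particular, the set of matrices of the form [[x+z, 0],[0,z]] with x ∈ Z_m \ {0} and z ∈ Z_m forms a clique of size m(m−1). -/
open Matrix

/-- The ring of 2×2 upper triangular matrices over `R`. -/
def Tri (R : Type*) [CommRing R] : Subring (Matrix (Fin 2) (Fin 2) R) where
  carrier := {A | A 1 0 = 0}
  mul_mem' := by
    intro a b ha hb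
    simp only [Set.mem_setOf_eq] at *
    simp [Matrix.mul_apply, Fin.sum_univ_two, ha, hb]
  one_mem' := by simp [Matrix.one_apply]
  add_mem' := by
    intro a b ha hb
    simp_all [Matrix.add_apply]
  zero_mem' := by simp
  neg_mem' := by
    intro a ha
    simp_all

/-- The commuting graph of a ring `T`: vertices are the noncentral elements,
two distinct vertices are adjacent iff they commute. -/
def commGraph (T : Type*) [Ring T] : SimpleGraph {x : T // x ∉ Set.center T} where
  Adj a b := a ≠ b ∧ (a : T) * b = b * a
  symm := by
    constructor
    rintro a b ⟨h1, h2⟩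
    exact ⟨h1.symm, h2.symm⟩
  loopless := by constructor; rintro a ⟨h, _⟩; exact h rfl

/-- Annihilator of a set in `ZMod m`, as an additive subgroup. -/
def annSub {m : ℕ} (P : Set (ZMod m)) : AddSubgroup (ZMod m) where
  carrier := {t | ∀ u ∈ P, u * t = 0}
  add_mem' := by intro a b ha hb u hu; rw [mul_add, ha u hu, hb u hu, add_zero]
  zero_mem' := by intro u hu; rw [mul_zero]
  neg_mem' := by intro a ha u hu; rw [mul_neg, ha u hu, neg_zero]

lemma annSub_mul_card {m : ℕ} [NeZero m] (P : Set (ZMod m)) :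
    Nat.card P * Nat.card (annSub P) ≤ m := by
  obtain ⟨g, hg⟩ := IsAddCyclic.exists_generator (α := annSub P)
  set ψ : ZMod m →+ ZMod m := AddMonoidHom.mulRight (g : ZMod m) with hψ
  have hker : P ⊆ (ψ.ker : Set (ZMod m)) := by
    intro u hu
    exact g.2 u hu
  have hrange : (ψ.range : Set (ZMod m)) = (annSub P : Set (ZMod m)) := by
    ext t
    constructor
    · rintro ⟨u, rfl⟩
      intro p hp
      show p * (u * (g:ZMod m)) = 0
      calc p * (u * (g:ZMod m)) = u * (p * (g:ZMod m)) := by ring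
        _ = 0 := by rw [g.2 p hp, mul_zero]
    · intro ht
      obtain ⟨n, hn⟩ := hg ⟨t, ht⟩
      refine ⟨(n : ZMod m), ?_⟩
      have : ((n • g : annSub P) : ZMod m) = t := by
        have := congrArg (Subtype.val) hn
        simpa using this
      rw [AddSubgroup.coe_zsmul] at this
      show (n:ZMod m) * (g:ZMod m) = t
      rw [← zsmul_eq_mul, this]
  have h1 : Nat.card P ≤ Nat.card ψ.ker := by
    have := Nat.card_mono (Set.toFinite (ψ.ker : Set (ZMod m))) hker
    simpa using this
  have h2 : Nat.card (annSub P) = Nat.card ψ.range := by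
    have := Nat.card_congr (Equiv.setCongr hrange)
    rw [SetLike.coe_sort_coe, SetLike.coe_sort_coe] at this
    exact this.symm
  have h3 : Nat.card (ZMod m) = Nat.card ψ.range * Nat.card ψ.ker := by
    rw [AddSubgroup.card_eq_card_quotient_mul_card_addSubgroup ψ.ker]
    congr 1
    exact Nat.card_congr (QuotientAddGroup.quotientKerEquivRange ψ).toEquiv
  have h4 : Nat.card (ZMod m) = m := Nat.card_zmod m
  calc Nat.card P * Nat.card (annSub P) ≤ Nat.card ψ.ker * Nat.card ψ.range := by
        rw [h2]; exact Nat.mul_le_mul_right _ h1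
    _ = m := by rw [mul_comm, ← h3, h4]

lemma iso_card {m : ℕ} [NeZero m] (S : Set (ZMod m × ZMod m))
    (hS : ∀ a ∈ S, ∀ b ∈ S, a.1 * b.2 = b.1 * a.2) : Nat.card S ≤ m := by
  set P : Set (ZMod m) := Prod.fst '' S with hPdef
  have hfib : ∀ a ∈ S, ∀ b ∈ S, a.1 = b.1 → a.2 - b.2 ∈ annSub P := by
    rintro a ha b hb hab u ⟨c, hc, rfl⟩
    have h1 := hS c hc a ha
    have h2 := hS c hc b hb
    rw [mul_sub, h1, h2, hab, sub_self]
  have hrep : ∀ u : P, ∃ c, c ∈ S ∧ c.1 = (u : ZMod m) := by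
    rintro ⟨u, c, hc, rfl⟩
    exact ⟨c, hc, rfl⟩
  choose rep hrepS hrep1 using hrep
  have key : Nat.card S ≤ Nat.card (P × annSub P) := by
    apply Nat.card_le_card_of_injective
      (fun a => (⟨(a : ZMod m × ZMod m).1, (a:ZMod m × ZMod m), a.2, rfl⟩,
        ⟨(a : ZMod m × ZMod m).2 - (rep ⟨(a : ZMod m × ZMod m).1, (a:ZMod m × ZMod m), a.2, rfl⟩).2,
          hfib _ a.2 _ (hrepS _) (hrep1 ⟨(a : ZMod m × ZMod m).1, (a:ZMod m × ZMod m), a.2, rfl⟩).symm⟩))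
    intro a b hab
    have h1 : (a : ZMod m × ZMod m).1 = (b : ZMod m × ZMod m).1 :=
      congrArg (fun x => (x.1 : ZMod m)) hab
    have h2 : ((a : ZMod m × ZMod m).2 - (rep ⟨(a : ZMod m × ZMod m).1, (a:ZMod m × ZMod m), a.2, rfl⟩).2)
        = ((b : ZMod m × ZMod m).2 - (rep ⟨(b : ZMod m × ZMod m).1, (b:ZMod m × ZMod m), b.2, rfl⟩).2) :=
      congrArg (fun x => (x.2 : ZMod m)) hab
    have hPa : (⟨(a : ZMod m × ZMod m).1, (a:ZMod m × ZMod m), a.2, rfl⟩ : P)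
        = ⟨(b : ZMod m × ZMod m).1, (b:ZMod m × ZMod m), b.2, rfl⟩ := Subtype.ext h1
    rw [hPa] at h2
    have h2' : (a : ZMod m × ZMod m).2 = (b : ZMod m × ZMod m).2 := sub_left_injective h2
    exact Subtype.ext (Prod.ext h1 h2')
  rw [Nat.card_prod] at key
  exact key.trans (annSub_mul_card P)

lemma fin2_comm {m : ℕ} (a b c x y z : ZMod m) :
    (!![a,b;0,c] * !![x,y;0,z] : Matrix (Fin 2) (Fin 2) (ZMod m)) = !![x,y;0,z] * !![a,b;0,c] ↔
      (a - c) * y = (x - z) * b := by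
  rw [Matrix.mul_fin_two, Matrix.mul_fin_two, ← Matrix.ext_iff]
  simp [Fin.forall_fin_two, mul_comm]
  constructor
  · intro h; linear_combination h
  · intro h; linear_combination h

lemma tri_eta {m : ℕ} (A : Matrix (Fin 2) (Fin 2) (ZMod m)) (hA : A 1 0 = 0) :
    A = !![A 0 0, A 0 1; 0, A 1 1] := by
  rw [← hA]; exact (Matrix.eta_fin_two A)

lemma matrix_comm_iff {m : ℕ} (A B : Matrix (Fin 2) (Fin 2) (ZMod m)) (hA : A 1 0 = 0) (hB : B 1 0 = 0) :
    A * B = B * A ↔ (A 0 0 - A 1 1) * B 0 1 = (B 0 0 - B 1 1) * A 0 1 := by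
  constructor
  · intro h
    refine (fin2_comm (A 0 0) (A 0 1) (A 1 1) (B 0 0) (B 0 1) (B 1 1)).mp ?_
    rw [← tri_eta A hA, ← tri_eta B hB]
    exact h
  · intro h
    rw [tri_eta A hA, tri_eta B hB]
    exact (fin2_comm (A 0 0) (A 0 1) (A 1 1) (B 0 0) (B 0 1) (B 1 1)).mpr h

lemma tri_comm_iff {m : ℕ} (A B : Tri (ZMod m)) :
    A * B = B * A ↔
      ((A : Matrix (Fin 2) (Fin 2) (ZMod m)) 0 0 - (A : Matrix (Fin 2) (Fin 2) (ZMod m)) 1 1) *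
        (B : Matrix (Fin 2) (Fin 2) (ZMod m)) 0 1 =
      ((B : Matrix (Fin 2) (Fin 2) (ZMod m)) 0 0 - (B : Matrix (Fin 2) (Fin 2) (ZMod m)) 1 1) *
        (A : Matrix (Fin 2) (Fin 2) (ZMod m)) 0 1 := by
  rw [Subtype.ext_iff]
  push_cast
  exact matrix_comm_iff _ _ A.2 B.2

lemma tri_center_iff {m : ℕ} (A : Tri (ZMod m)) :
    A ∈ Set.center (Tri (ZMod m)) ↔
      (A : Matrix (Fin 2) (Fin 2) (ZMod m)) 0 0 = (A : Matrix (Fin 2) (Fin 2) (ZMod m)) 1 1 ∧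
      (A : Matrix (Fin 2) (Fin 2) (ZMod m)) 0 1 = 0 := by
  rw [Semigroup.mem_center_iff]
  constructor
  · intro hc
    have hE01 : (!![0,1;0,0] : Matrix (Fin 2) (Fin 2) (ZMod m)) ∈ Tri (ZMod m) := by
      show (!![0,1;0,0] : Matrix (Fin 2) (Fin 2) (ZMod m)) 1 0 = 0; simp
    have hE00 : (!![1,0;0,0] : Matrix (Fin 2) (Fin 2) (ZMod m)) ∈ Tri (ZMod m) := by
      show (!![1,0;0,0] : Matrix (Fin 2) (Fin 2) (ZMod m)) 1 0 = 0; simp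
    constructor
    · have h := (tri_comm_iff A ⟨_, hE01⟩).mp (hc ⟨_, hE01⟩).symm
      simp at h
      linear_combination h
    · have h := (tri_comm_iff A ⟨_, hE00⟩).mp (hc ⟨_, hE00⟩).symm
      simp at h
      linear_combination -h
  · rintro ⟨h1, h2⟩ B
    refine ((tri_comm_iff A B).mpr ?_).symm
    rw [h1, h2, sub_self, zero_mul, mul_zero]

lemma card_center_tri {m : ℕ} [NeZero m] : Nat.card (Set.center (Tri (ZMod m))) = m := by
  have hmem : ∀ r : ZMod m, (r • (1 : Matrix (Fin 2) (Fin 2) (ZMod m))) ∈ Tri (ZMod m) := by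
    intro r
    show (r • (1 : Matrix (Fin 2) (Fin 2) (ZMod m))) 1 0 = 0
    simp [Matrix.one_apply]
  have hcent : ∀ r : ZMod m,
      (⟨r • (1 : Matrix (Fin 2) (Fin 2) (ZMod m)), hmem r⟩ : Tri (ZMod m)) ∈
        Set.center (Tri (ZMod m)) := by
    intro r
    rw [tri_center_iff]
    constructor <;> simp [Matrix.one_apply]
  have key : Nat.card (ZMod m) = Nat.card (Set.center (Tri (ZMod m))) := by
    refine Nat.card_eq_of_bijective
      (fun r => ⟨⟨r • (1 : Matrix (Fin 2) (Fin 2) (ZMod m)), hmem r⟩, hcent r⟩) ⟨?_, ?_⟩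
    · intro r r' hrr
      have := congrArg
        (fun x => (((x : Set.center (Tri (ZMod m))) : Tri (ZMod m)) :
          Matrix (Fin 2) (Fin 2) (ZMod m)) 0 0) hrr
      simpa [Matrix.one_apply] using this
    · rintro ⟨A, hA⟩
      rw [tri_center_iff] at hA
      refine ⟨(A : Matrix (Fin 2) (Fin 2) (ZMod m)) 1 1, ?_⟩
      apply Subtype.ext
      apply Subtype.ext
      show (A : Matrix (Fin 2) (Fin 2) (ZMod m)) 1 1 • (1:Matrix (Fin 2) (Fin 2) (ZMod m)) = A
      rw [tri_eta (A : Matrix (Fin 2) (Fin 2) (ZMod m)) A.2, hA.1, hA.2]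
      ext i j
      fin_cases i <;> fin_cases j <;> simp [Matrix.one_apply]
  rw [Nat.card_zmod] at key
  exact key.symm

lemma comm_card {m : ℕ} [NeZero m] (S : Set (Tri (ZMod m)))
    (hc : ∀ A ∈ S, ∀ B ∈ S, A * B = B * A) : Nat.card S ≤ m * m := by
  set φ : Tri (ZMod m) → ZMod m × ZMod m := fun A =>
    ((A : Matrix (Fin 2) (Fin 2) (ZMod m)) 0 0 - (A : Matrix (Fin 2) (Fin 2) (ZMod m)) 1 1,
      (A : Matrix (Fin 2) (Fin 2) (ZMod m)) 0 1) with hφ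
  have hW : ∀ a ∈ φ '' S, ∀ b ∈ φ '' S, a.1 * b.2 = b.1 * a.2 := by
    rintro _ ⟨a, ha, rfl⟩ _ ⟨b, hb, rfl⟩
    exact (tri_comm_iff a b).mp (hc a ha b hb)
  have h1 : Nat.card (φ '' S) ≤ m := iso_card (φ '' S) hW
  have key : Nat.card S ≤ Nat.card ((φ '' S) × ZMod m) := by
    apply Nat.card_le_card_of_injective
      (fun (a : S) => (⟨φ a, (a : Tri (ZMod m)), a.2, rfl⟩,
        ((a : Tri (ZMod m)) : Matrix (Fin 2) (Fin 2) (ZMod m)) 1 1))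
    intro a b hab
    have h1' : φ a = φ b := congrArg (fun x => (x.1 : ZMod m × ZMod m)) hab
    have h2 : ((a : Tri (ZMod m)) : Matrix (Fin 2) (Fin 2) (ZMod m)) 1 1
        = ((b : Tri (ZMod m)) : Matrix (Fin 2) (Fin 2) (ZMod m)) 1 1 :=
      congrArg Prod.snd hab
    have hfst := congrArg Prod.fst h1'
    have hsnd := congrArg Prod.snd h1'
    simp only [hφ] at hfst hsnd
    have h00 : ((a : Tri (ZMod m)) : Matrix (Fin 2) (Fin 2) (ZMod m)) 0 0
        = ((b : Tri (ZMod m)) : Matrix (Fin 2) (Fin 2) (ZMod m)) 0 0 := by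
      linear_combination hfst + h2
    apply Subtype.ext
    apply Subtype.ext
    rw [tri_eta ((a : Tri (ZMod m)) : Matrix (Fin 2) (Fin 2) (ZMod m)) (a : Tri (ZMod m)).2,
      tri_eta ((b : Tri (ZMod m)) : Matrix (Fin 2) (Fin 2) (ZMod m)) (b : Tri (ZMod m)).2,
      h00, hsnd, h2]
  rw [Nat.card_prod, Nat.card_zmod] at key
  calc Nat.card S ≤ Nat.card (φ '' S) * m := key
    _ ≤ m * m := Nat.mul_le_mul_right _ h1

lemma clique_bound {m : ℕ} (hm : 2 ≤ m)
    (s : Finset {x : Tri (ZMod m) // x ∉ Set.center (Tri (ZMod m))})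
    (hs : (commGraph (Tri (ZMod m))).IsClique s) : s.card ≤ m * (m - 1) := by
  haveI : NeZero m := ⟨by omega⟩
  set S : Set (Tri (ZMod m)) :=
    (Subtype.val '' (s : Set {x : Tri (ZMod m) // x ∉ Set.center (Tri (ZMod m))}))
      ∪ Set.center (Tri (ZMod m)) with hSdef
  have hc : ∀ A ∈ S, ∀ B ∈ S, A * B = B * A := by
    rintro A (⟨a, ha, rfl⟩ | hA) B hB
    · rcases hB with ⟨b, hb, rfl⟩ | hB
      · by_cases hab : a = b
        · rw [hab]
        · exact (hs ha hb (fun hh => hab hh)).2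
      · exact (Semigroup.mem_center_iff.mp hB) _
    · exact ((Semigroup.mem_center_iff.mp hA) _).symm
  have h2 := comm_card S hc
  have hdisj : Disjoint
      (Subtype.val '' (s : Set {x : Tri (ZMod m) // x ∉ Set.center (Tri (ZMod m))}))
      (Set.center (Tri (ZMod m))) := by
    rw [Set.disjoint_left]
    rintro _ ⟨a, _, rfl⟩
    exact a.2
  have hcard : Nat.card S = s.card + m := by
    rw [Nat.card_coe_set_eq, hSdef, Set.ncard_union_eq hdisj (Set.toFinite _) (Set.toFinite _)]
    congr 1
    · rw [Set.ncard_image_of_injective _ Subtype.val_injective, Set.ncard_coe_finset]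
    · rw [← Nat.card_coe_set_eq]
      exact card_center_tri
  rw [hcard] at h2
  have hmm : m * (m - 1) + m = m * m := by
    obtain ⟨k, rfl⟩ := Nat.exists_eq_add_of_le hm
    rw [show 2 + k - 1 = 1 + k by omega]
    ring
  omega

lemma dmem {m : ℕ} (x z : ZMod m) : (!![x+z,0;0,z] : Matrix (Fin 2) (Fin 2) (ZMod m)) ∈ Tri (ZMod m) := by
  show (!![x+z,0;0,z] : Matrix (Fin 2) (Fin 2) (ZMod m)) 1 0 = 0
  simp

lemma dnotcentral {m : ℕ} (x z : ZMod m) (hx : x ≠ 0) :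
    (⟨!![x+z,0;0,z], dmem x z⟩ : Tri (ZMod m)) ∉ Set.center (Tri (ZMod m)) := by
  rw [tri_center_iff]
  rintro ⟨h1, -⟩
  simp only at h1
  apply hx
  have : x + z = z := by simpa using h1
  linear_combination this

lemma dcomm {m : ℕ} (x z x' z' : ZMod m) :
    (⟨!![x+z,0;0,z], dmem x z⟩ : Tri (ZMod m)) * ⟨!![x'+z',0;0,z'], dmem x' z'⟩
      = ⟨!![x'+z',0;0,z'], dmem x' z'⟩ * ⟨!![x+z,0;0,z], dmem x z⟩ := by
  rw [tri_comm_iff]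
  show (_ - _) * (!![x'+z',0;0,z'] : Matrix (Fin 2) (Fin 2) (ZMod m)) 0 1 = (_ - _) * (!![x+z,0;0,z] : Matrix (Fin 2) (Fin 2) (ZMod m)) 0 1
  simp

lemma dinj {m : ℕ} : Function.Injective
    (fun p : {x : ZMod m // x ≠ 0} × ZMod m =>
      (⟨!![p.1.1+p.2,0;0,p.2], dmem p.1.1 p.2⟩ : Tri (ZMod m))) := by
  intro p q hpq
  rw [Subtype.ext_iff] at hpq
  simp only at hpq
  have h11 : p.2 = q.2 := by
    have := congrFun (congrFun hpq 1) 1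
    simpa using this
  have h00 : p.1.1 + p.2 = q.1.1 + q.2 := by
    have := congrFun (congrFun hpq 0) 0
    simpa using this
  have : p.1.1 = q.1.1 := by rw [h11] at h00; exact add_right_cancel h00
  exact Prod.ext (Subtype.ext this) h11

lemma card_nonzero {m : ℕ} [NeZero m] : Nat.card {x : ZMod m // x ≠ 0} = m - 1 := by
  rw [Nat.card_eq_fintype_card, Fintype.card_subtype_compl, Fintype.card_subtype_eq, ZMod.card]

/-- Theorem 2.10: if `m ≥ 2` is not prime, the clique number of the commuting
graph of `Tri (ZMod m)` is `m (m - 1)`; in particular the set of matrices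
`[[x+z,0],[0,z]]` with `x ≠ 0` consists of noncentral, pairwise commuting
elements and has cardinality `m (m - 1)`. -/
theorem cliqueNum_commGraph_tri_zmod (m : ℕ) (hm : 2 ≤ m) (h : ¬ m.Prime) :
    (commGraph (Tri (ZMod m))).cliqueNum = m * (m - 1) ∧
    (Nat.card {A : Tri (ZMod m) | ∃ (x z : ZMod m), x ≠ 0 ∧
        (A : Matrix (Fin 2) (Fin 2) (ZMod m)) = !![x + z, 0; 0, z]} = m * (m - 1) ∧
      (∀ A ∈ {A : Tri (ZMod m) | ∃ (x z : ZMod m), x ≠ 0 ∧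
          (A : Matrix (Fin 2) (Fin 2) (ZMod m)) = !![x + z, 0; 0, z]},
        A ∉ Set.center (Tri (ZMod m))) ∧
      ∀ A ∈ {A : Tri (ZMod m) | ∃ (x z : ZMod m), x ≠ 0 ∧
          (A : Matrix (Fin 2) (Fin 2) (ZMod m)) = !![x + z, 0; 0, z]},
        ∀ B ∈ {A : Tri (ZMod m) | ∃ (x z : ZMod m), x ≠ 0 ∧
          (A : Matrix (Fin 2) (Fin 2) (ZMod m)) = !![x + z, 0; 0, z]},
        A * B = B * A) := by
  haveI : NeZero m := ⟨by omega⟩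
  refine ⟨?_, ?_, ?_, ?_⟩
  · -- clique number
    have hinj : Function.Injective
        (fun p : {x : ZMod m // x ≠ 0} × ZMod m =>
          (⟨⟨!![p.1.1+p.2,0;0,p.2], dmem p.1.1 p.2⟩, dnotcentral p.1.1 p.2 p.1.2⟩ :
            {x : Tri (ZMod m) // x ∉ Set.center (Tri (ZMod m))})) := by
      intro p q hpq
      exact dinj (congrArg Subtype.val hpq)
    set s : Finset {x : Tri (ZMod m) // x ∉ Set.center (Tri (ZMod m))} :=
      Finset.univ.map ⟨_, hinj⟩ with hsdef
    have hclique : (commGraph (Tri (ZMod m))).IsNClique (m * (m-1)) s := by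
      constructor
      · intro a ha b hb hab
        simp only [hsdef, Finset.coe_map, Set.mem_image, Finset.coe_univ, Set.mem_univ,
          Function.Embedding.coeFn_mk, true_and] at ha hb
        obtain ⟨p, rfl⟩ := ha
        obtain ⟨q, rfl⟩ := hb
        exact ⟨hab, dcomm _ _ _ _⟩
      · rw [hsdef, Finset.card_map, Finset.card_univ, Fintype.card_prod,
          Fintype.card_subtype_compl, Fintype.card_subtype_eq, ZMod.card, mul_comm]
    have hne : {n | ∃ t, (commGraph (Tri (ZMod m))).IsNClique n t}.Nonempty :=
      ⟨m * (m-1), s, hclique⟩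
    have hub : m * (m-1) ∈ upperBounds {n | ∃ t, (commGraph (Tri (ZMod m))).IsNClique n t} := by
      rintro n ⟨t, ht⟩
      exact ht.card_eq ▸ clique_bound hm t ht.isClique
    exact le_antisymm (csSup_le hne hub) (le_csSup ⟨m * (m-1), hub⟩ ⟨s, hclique⟩)
  · -- cardinality of the diagonal set
    have hbij : Function.Bijective
        (fun p : {x : ZMod m // x ≠ 0} × ZMod m =>
          (⟨⟨!![p.1.1+p.2,0;0,p.2], dmem p.1.1 p.2⟩, ⟨p.1.1, p.2, p.1.2, rfl⟩⟩ :
            {A : Tri (ZMod m) | ∃ (x z : ZMod m), x ≠ 0 ∧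
              (A : Matrix (Fin 2) (Fin 2) (ZMod m)) = !![x + z, 0; 0, z]})) := by
      constructor
      · intro p q hpq
        exact dinj (congrArg Subtype.val hpq)
      · rintro ⟨A, x, z, hx, hA⟩
        exact ⟨(⟨x, hx⟩, z), Subtype.ext (Subtype.ext hA.symm)⟩
    rw [← Nat.card_eq_of_bijective _ hbij, Nat.card_prod, Nat.card_zmod, card_nonzero, mul_comm]
  · -- noncentral
    rintro A ⟨x, z, hx, hA⟩
    rw [show A = ⟨!![x+z,0;0,z], dmem x z⟩ from Subtype.ext hA]
    exact dnotcentral x z hx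
  · -- pairwise commuting
    rintro A ⟨x, z, hx, hA⟩ B ⟨x', z', hx', hB⟩
    rw [show A = ⟨!![x+z,0;0,z], dmem x z⟩ from Subtype.ext hA,
      show B = ⟨!![x'+z',0;0,z'], dmem x' z'⟩ from Subtype.ext hB]
    exact dcomm x z x' z'
end

section
/- Let R and S be finite fields such that the commuting graphs of Tr(R) and Tr(S) are isomorphic. Then R and S are isomorphic as rings. -/
open Matrix

section Aux
variable {R : Type*} [CommRing R]

lemma mem_tri_iff (A : Matrix (Fin 2) (Fin 2) R) : A ∈ Tri R ↔ A 1 0 = 0 := Iff.rfl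

def triEquiv : Tri R ≃ R × R × R where
  toFun A := (A.1 0 0, A.1 0 1, A.1 1 1)
  invFun x := ⟨!![x.1, x.2.1; 0, x.2.2], by rw [mem_tri_iff]; simp⟩
  left_inv := by
    rintro ⟨A, hA⟩
    have h0 : A 1 0 = 0 := hA
    ext i j
    fin_cases i <;> fin_cases j <;> simp [h0]
  right_inv := by rintro ⟨a, b, c⟩; simp

lemma mem_center_tri_iff (x : Tri R) :
    x ∈ Set.center (Tri R) ↔ x.1 0 1 = 0 ∧ x.1 0 0 = x.1 1 1 := by
  rw [Semigroup.mem_center_iff]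
  constructor
  · intro hc
    have hx : x.1 1 0 = 0 := x.2
    have h1 := hc ⟨!![1, 0; 0, 0], by rw [mem_tri_iff]; simp⟩
    have h2 := hc ⟨!![0, 1; 0, 0], by rw [mem_tri_iff]; simp⟩
    have ha1 : !![1, 0; 0, 0] * x.1 = x.1 * !![1, 0; 0, 0] := by
      simpa using Subtype.ext_iff.mp h1
    have ha2 : !![0, 1; 0, 0] * x.1 = x.1 * !![0, 1; 0, 0] := by
      simpa using Subtype.ext_iff.mp h2
    simp [← Matrix.ext_iff, Matrix.mul_apply, Fin.sum_univ_two, Fin.forall_fin_two,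
      Matrix.vecMul, dotProduct] at ha1 ha2
    constructor
    · tauto
    · exact ha2.1.2.symm
  · rintro ⟨h1, h2⟩ g
    have hg : g.1 1 0 = 0 := g.2
    have hx : x.1 1 0 = 0 := x.2
    apply Subtype.ext
    show g.1 * x.1 = x.1 * g.1
    ext i j
    fin_cases i <;> fin_cases j <;>
      simp [Matrix.mul_apply, Fin.sum_univ_two, h1, h2, hg, hx] <;> ring

def centerTriEquiv : {x : Tri R // x ∈ Set.center (Tri R)} ≃ R where
  toFun x := x.1.1 0 0
  invFun a := ⟨⟨!![a, 0; 0, a], by rw [mem_tri_iff]; simp⟩, by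
    rw [mem_center_tri_iff]; simp⟩
  left_inv := by
    rintro ⟨x, hx⟩
    rw [mem_center_tri_iff] at hx
    have hx' : x.1 1 0 = 0 := x.2
    apply Subtype.ext
    apply Subtype.ext
    ext i j
    fin_cases i <;> fin_cases j <;> simp_all
  right_inv := by intro a; simp

end Aux

set_option maxHeartbeats 1000000 in
/-- Remark 2.8: if `R` and `S` are finite fields whose rings of 2×2 upper
triangular matrices have isomorphic commuting graphs, then `R ≅ S`. -/
theorem ringIso_of_commGraph_iso {R S : Type*} [Field R] [Fintype R]
    [Field S] [Fintype S]
    (h : Nonempty (commGraph (Tri R) ≃g commGraph (Tri S))) :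
    Nonempty (R ≃+* S) := by
  classical
  obtain ⟨iso⟩ := h
  have e := iso.toEquiv
  set q := Fintype.card R with hq
  set p := Fintype.card S with hp
  have sR : Nat.card {x : Tri R // x ∈ Set.center (Tri R)} +
        Nat.card {x : Tri R // x ∉ Set.center (Tri R)} = Nat.card (Tri R) := by
    rw [← Nat.card_sum, Nat.card_congr (Equiv.sumCompl _)]
  have sS : Nat.card {x : Tri S // x ∈ Set.center (Tri S)} +
        Nat.card {x : Tri S // x ∉ Set.center (Tri S)} = Nat.card (Tri S) := by
    rw [← Nat.card_sum, Nat.card_congr (Equiv.sumCompl _)]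
  have cardTriR : Nat.card (Tri R) = q ^ 3 := by
    rw [Nat.card_congr triEquiv]; simp [Nat.card_eq_fintype_card]; ring
  have cardTriS : Nat.card (Tri S) = p ^ 3 := by
    rw [Nat.card_congr triEquiv]; simp [Nat.card_eq_fintype_card]; ring
  have cardCR : Nat.card {x : Tri R // x ∈ Set.center (Tri R)} = q := by
    rw [Nat.card_congr centerTriEquiv, Nat.card_eq_fintype_card]
  have cardCS : Nat.card {x : Tri S // x ∈ Set.center (Tri S)} = p := by
    rw [Nat.card_congr centerTriEquiv, Nat.card_eq_fintype_card]
  have key : Nat.card {x : Tri R // x ∉ Set.center (Tri R)} =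
      Nat.card {x : Tri S // x ∉ Set.center (Tri S)} := Nat.card_congr e
  rw [cardTriR, cardCR, key] at sR
  rw [cardTriS, cardCS] at sS
  have hq2 : 2 ≤ q := Fintype.one_lt_card
  have hp2 : 2 ≤ p := Fintype.one_lt_card
  have key2 : q ^ 3 + p = p ^ 3 + q := by omega
  have hZ : ((q : ℤ)) ^ 3 + p = (p : ℤ) ^ 3 + q := by exact_mod_cast key2
  have hq2' : (2 : ℤ) ≤ q := by exact_mod_cast hq2
  have hp2' : (2 : ℤ) ≤ p := by exact_mod_cast hp2
  have : q = p := by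
    rcases lt_trichotomy q p with h' | h' | h'
    · exfalso
      have h1 : (0 : ℤ) < (p : ℤ) - q := by
        have : (q : ℤ) < p := by exact_mod_cast h'
        linarith
      have h2 : (0 : ℤ) < (p : ℤ) ^ 2 + p * q + q ^ 2 - 1 := by nlinarith
      nlinarith [mul_pos h1 h2]
    · exact h'
    · exfalso
      have h1 : (0 : ℤ) < (q : ℤ) - p := by
        have : (p : ℤ) < q := by exact_mod_cast h'
        linarith
      have h2 : (0 : ℤ) < (p : ℤ) ^ 2 + p * q + q ^ 2 - 1 := by nlinarith
      nlinarith [mul_pos h1 h2]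
  exact ⟨FiniteField.ringEquivOfCardEq this⟩
end
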